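/- Let (X_n)_{n≥1} be a sequence of real-valued random variables on a probability space, and assume that for every ε > 0 there exist constants C₀ > 0, C₁ > 1, and K < ∞ such that for every integer n ≥ 2, P( max over integers j with n ≤ j ≤ C₁·n of |X_j| ≥ ε ) ≤ K·(log n)^{−(2+C₀)}. Then almost surely lim_{n→∞} X_n = 0. -/

import Mathlib

open MeasureTheory ProbabilityTheory Filter

theorem stmt_11 {Ω : Type*} [MeasureSpace Ω] [IsProbabilityMeasure (ℙ : Measure Ω)]
    (X : ℕ → Ω → ℝ) (hmeas : ∀ n, Measurable (X n))
    (h : ∀ ε : ℝ, 0 < ε → ∃ C₀ > (0 : ℝ), ∃ C₁ > (1 : ℝ), ∃ K : ℝ, ∀ n : ℕ, 2 ≤ n →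
      ℙ {ω | ∃ j : ℕ, n ≤ j ∧ (j : ℝ) ≤ C₁ * n ∧ ε ≤ |X j ω|}
        ≤ ENNReal.ofReal (K * Real.log n ^ (-(2 + C₀)))) :
    ∀ᵐ ω ∂(ℙ : Measure Ω), Tendsto (fun n : ℕ => X n ω) atTop (nhds 0) := by
  have key : ∀ ε : ℝ, 0 < ε → ∀ᵐ ω ∂(ℙ : Measure Ω), ∀ᶠ n in atTop, |X n ω| < ε := by
    intro ε hε
    obtain ⟨C₀, hC₀, C₁, hC₁, K, hK⟩ := h ε hε
    have hC₁0 : (0:ℝ) < C₁ := lt_trans one_pos hC₁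
    set nseq : ℕ → ℕ := fun k => ⌈C₁ ^ (k + 2)⌉₊ with hnseq
    set E : ℕ → Set Ω :=
      fun k => {ω | ∃ j : ℕ, nseq k ≤ j ∧ (j : ℝ) ≤ C₁ * (nseq k : ℝ) ∧ ε ≤ |X j ω|} with hEdef
    have hpow1 : ∀ k : ℕ, (1:ℝ) < C₁ ^ (k + 2) := fun k => one_lt_pow₀ hC₁ (by omega)
    have hpow0 : ∀ k : ℕ, (0:ℝ) < C₁ ^ (k + 2) := fun k => pow_pos hC₁0 _
    have hn2 : ∀ k, 2 ≤ nseq k := by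
      intro k
      have : (1:ℕ) < ⌈C₁ ^ (k + 2)⌉₊ := Nat.lt_ceil.2 (by exact_mod_cast hpow1 k)
      exact this
    have hnle : ∀ k, C₁ ^ (k + 2) ≤ (nseq k : ℝ) := fun k => Nat.le_ceil _
    have hlogC₁ : 0 < Real.log C₁ := Real.log_pos hC₁
    have hexp : -(2 + C₀) < -1 := by linarith
    have hbase : ∀ k : ℕ, 0 < ((k:ℝ) + 2) * Real.log C₁ := by
      intro k
      have : (0:ℝ) < (k:ℝ) + 2 := by positivity
      exact mul_pos this hlogC₁
    -- measure bound
    have hbound : ∀ k, ℙ (E k) ≤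
        ENNReal.ofReal (|K| * (((k:ℝ) + 2) * Real.log C₁) ^ (-(2 + C₀))) := by
      intro k
      refine le_trans (hK (nseq k) (hn2 k)) (ENNReal.ofReal_le_ofReal ?_)
      have hlogn : ((k:ℝ) + 2) * Real.log C₁ ≤ Real.log (nseq k) := by
        have h1 := Real.log_le_log (hpow0 k) (hnle k)
        rw [Real.log_pow] at h1
        push_cast at h1
        linarith
      have h2 : Real.log (nseq k) ^ (-(2 + C₀)) ≤
          (((k:ℝ) + 2) * Real.log C₁) ^ (-(2 + C₀)) :=
        Real.rpow_le_rpow_of_nonpos (hbase k) hlogn (by linarith)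
      have h3 : 0 ≤ Real.log (nseq k) ^ (-(2 + C₀)) :=
        Real.rpow_nonneg (le_trans (hbase k).le hlogn) _
      calc K * Real.log (nseq k) ^ (-(2 + C₀))
          ≤ |K| * Real.log (nseq k) ^ (-(2 + C₀)) :=
            mul_le_mul_of_nonneg_right (le_abs_self K) h3
        _ ≤ |K| * (((k:ℝ) + 2) * Real.log C₁) ^ (-(2 + C₀)) :=
            mul_le_mul_of_nonneg_left h2 (abs_nonneg K)
    -- summability
    have hsum : Summable (fun k : ℕ => |K| * (((k:ℝ) + 2) * Real.log C₁) ^ (-(2 + C₀))) := by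
      apply Summable.mul_left
      have hs : Summable (fun k : ℕ => ((k:ℝ) + 2) ^ (-(2 + C₀))) := by
        have := (Real.summable_nat_rpow (p := -(2 + C₀))).2 hexp
        have h2 := this.comp_injective (add_left_injective 2)
        refine h2.congr fun k => ?_
        simp only [Function.comp]
        push_cast
        ring_nf
      have := hs.mul_right ((Real.log C₁) ^ (-(2 + C₀)))
      refine this.congr fun k => ?_
      rw [← Real.mul_rpow (by positivity) hlogC₁.le]
    have htsum : (∑' k, ℙ (E k)) ≠ ⊤ := by
      refine ne_top_of_le_ne_top ?_ (ENNReal.tsum_le_tsum hbound)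
      rw [← ENNReal.ofReal_tsum_of_nonneg (fun k => by positivity) hsum]
      exact ENNReal.ofReal_ne_top
    have hae := MeasureTheory.ae_eventually_notMem htsum
    filter_upwards [hae] with ω hω
    rw [eventually_atTop] at hω ⊢
    obtain ⟨k₀, hk₀⟩ := hω
    refine ⟨nseq k₀, fun n hn => ?_⟩
    -- find the greatest k with nseq k ≤ n
    have hgrow : ∀ᶠ k in atTop, (n:ℝ) < C₁ ^ (k + 2) := by
      have h1 : Tendsto (fun k : ℕ => C₁ ^ k) atTop atTop :=
        tendsto_pow_atTop_atTop_of_one_lt hC₁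
      have h2 : Tendsto (fun k : ℕ => C₁ ^ (k + 2)) atTop atTop :=
        h1.comp (tendsto_add_atTop_nat 2)
      exact h2.eventually_gt_atTop n
    obtain ⟨m0, hm0⟩ := eventually_atTop.1 hgrow
    set m := max m0 k₀ with hm
    set P : ℕ → Prop := fun k => nseq k ≤ n with hP
    have hPk₀ : P k₀ := hn
    have hk₀m : k₀ ≤ m := le_max_right _ _
    set k := Nat.findGreatest P m with hkdef
    have hPk : P k := Nat.findGreatest_spec hk₀m hPk₀
    have hk₀k : k₀ ≤ k := Nat.le_findGreatest hk₀m hPk₀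
    have hnotPm : ¬ P m := by
      intro hPm
      have hlt : (n:ℝ) < C₁ ^ (m + 2) := hm0 m (le_max_left _ _)
      have hlt2 : (n:ℝ) < (nseq m : ℝ) := lt_of_lt_of_le hlt (hnle m)
      exact absurd (Nat.cast_le.2 hPm) (not_le.2 hlt2)
    have hkm : k < m :=
      lt_of_le_of_ne (Nat.findGreatest_le m) (fun he => hnotPm (he ▸ hPk))
    have hnotP : ¬ P (k + 1) :=
      Nat.findGreatest_is_greatest (Nat.lt_succ_self k) (by omega)
    have h4 : (n:ℝ) < C₁ ^ (k + 1 + 2) := Nat.lt_ceil.1 (not_le.1 hnotP)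
    have h5 : (n:ℝ) ≤ C₁ * (nseq k : ℝ) := by
      have heq : C₁ ^ (k + 1 + 2) = C₁ * C₁ ^ (k + 2) := by ring
      calc (n:ℝ) ≤ C₁ * C₁ ^ (k + 2) := by rw [← heq]; exact h4.le
        _ ≤ C₁ * (nseq k : ℝ) := mul_le_mul_of_nonneg_left (hnle k) hC₁0.le
    have hnot : ω ∉ E k := hk₀ k hk₀k
    exact not_le.1 (fun hcon => hnot ⟨n, hPk, h5, hcon⟩)
  -- conclude
  have hall := ae_all_iff.2 fun m : ℕ => key (1 / ((m:ℝ) + 1)) (by positivity)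
  filter_upwards [hall] with ω hω
  rw [Metric.tendsto_atTop]
  intro ε hε
  obtain ⟨m, hm⟩ := exists_nat_one_div_lt hε
  obtain ⟨N, hN⟩ := eventually_atTop.1 (hω m)
  refine ⟨N, fun n hn => ?_⟩
  rw [Real.dist_eq, sub_zero]
  exact lt_trans (hN n hn) hm
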